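/- Let B be a positive bounded operator on a Hilbert space H and ε > 0. Then there exists a rank-one positive operator C with ‖C‖ ≤ ε such that B + C attains its norm, i.e., there exists a unit vector y with (B+C)y = ‖B+C‖·y. -/

import Mathlib

section Aux

variable {H : Type*} [NormedAddCommGroup H] [InnerProductSpace ℂ H]

local notation "⟪" x ", " y "⟫" => (inner ℂ x y : ℂ)


lemma aux_cs (T : H →L[ℂ] H) (hsym : ∀ x y : H, ⟪T x, y⟫ = ⟪x, T y⟫)
    (hpos : ∀ x : H, 0 ≤ ⟪x, T x⟫.re) (x y : H) :
    ‖⟪x, T y⟫‖ ^ 2 ≤ ⟪x, T x⟫.re * ⟪y, T y⟫.re := by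
  set a := ⟪x, T x⟫.re with ha
  set c := ⟪y, T y⟫.re with hc
  set z := ⟪x, T y⟫ with hz
  have hyx : ⟪y, T x⟫ = starRingEnd ℂ z := by
    rw [hz, ← hsym x y, ← inner_conj_symm]
  have hzn : z * starRingEnd ℂ z = ((‖z‖ ^ 2 : ℝ) : ℂ) := by
    rw [Complex.mul_conj, Complex.normSq_eq_norm_sq]
  have key : ∀ t : ℝ, 0 ≤ (‖z‖ ^ 2 * a) * (t * t) + (2 * ‖z‖ ^ 2) * t + c := by
    intro t
    have h0 := hpos (((t : ℂ) * z) • x + y)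
    have hexp : ⟪((t : ℂ) * z) • x + y, T (((t : ℂ) * z) • x + y)⟫
        = ((z * starRingEnd ℂ z) * ((t:ℂ) * (t:ℂ))) * ⟪x, T x⟫
          + (t : ℂ) * (z * starRingEnd ℂ z) + (t : ℂ) * (z * starRingEnd ℂ z) + ⟪y, T y⟫ := by
      rw [map_add, map_smul]
      simp only [inner_add_left, inner_add_right, inner_smul_left, inner_smul_right, hyx, ← hz,
        map_mul, Complex.conj_ofReal]
      ring
    rw [hexp, hzn] at h0
    have e1 : (((‖z‖^2 : ℝ):ℂ) * ((t:ℂ) * (t:ℂ)) * ⟪x, T x⟫).re = ‖z‖^2 * (t*t) * a := by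
      have : ((‖z‖^2 : ℝ):ℂ) * ((t:ℂ) * (t:ℂ)) = (((‖z‖^2 * (t*t)) : ℝ) : ℂ) := by push_cast; ring
      rw [this, Complex.re_ofReal_mul]
    have e2 : ((t:ℂ) * ((‖z‖^2 : ℝ):ℂ)).re = t * ‖z‖^2 := by
      rw [Complex.re_ofReal_mul, Complex.ofReal_re]
    simp only [Complex.add_re, e1, e2] at h0
    linarith [h0]
  have hd := discrim_le_zero key
  rw [discrim] at hd
  rcases eq_or_ne z 0 with h | h
  · have := mul_nonneg (hpos x) (hpos y)
    simp [h]
    exact this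
  · have hz2 : 0 < ‖z‖ ^ 2 := by
      have := norm_pos_iff.mpr h
      positivity
    nlinarith [hd, hz2]

lemma aux_unit [Nontrivial H] : ∃ x : H, ‖x‖ = 1 := by
  obtain ⟨w, hw⟩ := exists_ne (0 : H)
  refine ⟨(‖w‖⁻¹ : ℂ) • w, ?_⟩
  rw [norm_smul]
  have : ‖w‖ ≠ 0 := norm_ne_zero_iff.mpr hw
  simp [this]

lemma aux_sup [Nontrivial H] (T : H →L[ℂ] H) (hsym : ∀ x y : H, ⟪T x, y⟫ = ⟪x, T y⟫)
    (hpos : ∀ x : H, 0 ≤ ⟪x, T x⟫.re) {μ : ℝ} (hμ : μ < ‖T‖) :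
    ∃ x : H, ‖x‖ = 1 ∧ μ < ⟪x, T x⟫.re := by
  by_contra hcon
  push_neg at hcon
  obtain ⟨x₀, hx₀⟩ := aux_unit (H := H)
  have hμ0 : 0 ≤ μ := le_trans (hpos x₀) (hcon x₀ hx₀)
  have hscale : ∀ y : H, ⟪y, T y⟫.re ≤ μ * ‖y‖ ^ 2 := by
    intro y
    rcases eq_or_ne y 0 with rfl | hy
    · simp
    · have hny : (0:ℝ) < ‖y‖ := norm_pos_iff.mpr hy
      have h1 : ‖(‖y‖⁻¹ : ℂ) • y‖ = 1 := by
        rw [norm_smul]; simp [hny.ne']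
      have h2 := hcon _ h1
      have h3 : ⟪(‖y‖⁻¹ : ℂ) • y, T ((‖y‖⁻¹ : ℂ) • y)⟫ = ((‖y‖⁻¹ ^ 2 : ℝ) : ℂ) * ⟪y, T y⟫ := by
        rw [map_smul, inner_smul_left, inner_smul_right, map_inv₀, Complex.conj_ofReal]
        push_cast; ring
      rw [h3, Complex.re_ofReal_mul] at h2
      have h4 : ‖y‖⁻¹ ^ 2 * ⟪y, T y⟫.re ≤ μ := h2
      calc ⟪y, T y⟫.re = (‖y‖⁻¹ ^ 2 * ⟪y, T y⟫.re) * ‖y‖ ^ 2 := by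
            field_simp
        _ ≤ μ * ‖y‖ ^ 2 := by
            have : (0:ℝ) ≤ ‖y‖ ^ 2 := by positivity
            exact mul_le_mul_of_nonneg_right h4 this
  have hTy : ∀ y : H, ‖T y‖ ≤ μ * ‖y‖ := by
    intro y
    have hcs := aux_cs T hsym hpos (T y) y
    have hself : ⟪T y, T y⟫ = ((‖T y‖ ^ 2 : ℝ) : ℂ) := by
      rw [inner_self_eq_norm_sq_to_K]; norm_cast
    rw [hself] at hcs
    have hre : ‖((‖T y‖ ^ 2 : ℝ) : ℂ)‖ ^ 2 = ‖T y‖ ^ 4 := by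
      rw [Complex.norm_real]
      rw [Real.norm_eq_abs, abs_of_nonneg (by positivity)]
      ring
    rw [hre] at hcs
    have h5 : ⟪T y, T (T y)⟫.re ≤ μ * ‖T y‖ ^ 2 := hscale (T y)
    have h6 : ⟪y, T y⟫.re ≤ μ * ‖y‖ ^ 2 := hscale y
    have h7 : ‖T y‖ ^ 4 ≤ (μ * ‖T y‖ ^ 2) * (μ * ‖y‖ ^ 2) := by
      calc ‖T y‖ ^ 4 ≤ ⟪T y, T (T y)⟫.re * ⟪y, T y⟫.re := hcs
        _ ≤ (μ * ‖T y‖ ^ 2) * (μ * ‖y‖ ^ 2) := by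
            apply mul_le_mul h5 h6 (hpos y) (by positivity)
    rcases eq_or_ne (T y) 0 with h | h
    · rw [h]; simp; positivity
    · have hpos' : (0:ℝ) < ‖T y‖ := norm_pos_iff.mpr h
      by_contra hlt
      push_neg at hlt
      have hmy : 0 ≤ μ * ‖y‖ := mul_nonneg hμ0 (norm_nonneg y)
      have hsq : (μ * ‖y‖) ^ 2 < ‖T y‖ ^ 2 := by nlinarith
      have : (μ * ‖y‖) ^ 2 * ‖T y‖ ^ 2 < ‖T y‖ ^ 2 * ‖T y‖ ^ 2 :=
        mul_lt_mul_of_pos_right hsq (by positivity)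
      nlinarith [h7]
  have : ‖T‖ ≤ μ := T.opNorm_le_bound hμ0 hTy
  linarith

end Aux

set_option maxHeartbeats 2000000 in
theorem positive_plus_small_rank_one_attains_norm
    {H : Type*} [NormedAddCommGroup H] [InnerProductSpace ℂ H] [CompleteSpace H]
    [Nontrivial H] (B : H →L[ℂ] H) (hBsa : IsSelfAdjoint B)
    (hBpos : ∀ x : H, 0 ≤ (inner ℂ x (B x) : ℂ).re)
    (ε : ℝ) (hε : 0 < ε) :
    ∃ C : H →L[ℂ] H, IsSelfAdjoint C ∧ (∀ x : H, 0 ≤ (inner ℂ x (C x) : ℂ).re) ∧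
      Module.finrank ℂ (LinearMap.range (C : H →ₗ[ℂ] H)) = 1 ∧ ‖C‖ ≤ ε ∧
      ∃ y : H, ‖y‖ = 1 ∧ (B + C) y = ‖B + C‖ • y := by

  have hBsym : ∀ x y : H, (inner ℂ (B x) y : ℂ) = inner ℂ x (B y) :=
    fun x y => (ContinuousLinearMap.isSelfAdjoint_iff_isSymmetric.mp hBsa) x y
  obtain ⟨u, hu1, hu2⟩ := aux_sup B hBsym hBpos (μ := ‖B‖ - ε / 2) (by linarith)
  have hune : u ≠ 0 := by
    intro h; rw [h, norm_zero] at hu1; norm_num at hu1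
  set C : H →L[ℂ] H := (ε : ℂ) • ((innerSL ℂ u).smulRight u) with hCdef
  have hCapp : ∀ x : H, C x = ((ε : ℂ) * (inner ℂ u x : ℂ)) • u := by
    intro x
    rw [hCdef]
    simp only [ContinuousLinearMap.smul_apply, ContinuousLinearMap.smulRight_apply,
      innerSL_apply_apply]
    rw [smul_smul]
  have hCsym : ∀ x y : H, (inner ℂ (C x) y : ℂ) = inner ℂ x (C y) := by
    intro x y
    rw [hCapp, hCapp, inner_smul_left, inner_smul_right, map_mul, Complex.conj_ofReal,
      inner_conj_symm]
    ring
  have hCsa : IsSelfAdjoint C :=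
    ContinuousLinearMap.isSelfAdjoint_iff_isSymmetric.mpr (fun x y => hCsym x y)
  have hCpos : ∀ x : H, 0 ≤ (inner ℂ x (C x) : ℂ).re := by
    intro x
    rw [hCapp, inner_smul_right]
    have h1 : (inner ℂ x u : ℂ) = starRingEnd ℂ (inner ℂ u x) := (inner_conj_symm x u).symm
    rw [h1]
    have h2 : (↑ε * (inner ℂ u x : ℂ)) * starRingEnd ℂ (inner ℂ u x)
        = (ε : ℂ) * ((inner ℂ u x : ℂ) * starRingEnd ℂ (inner ℂ u x)) := by ring
    rw [h2, Complex.mul_conj, ← Complex.ofReal_mul, Complex.ofReal_re]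
    exact mul_nonneg hε.le (Complex.normSq_nonneg _)
  have huu : (inner ℂ u u : ℂ) = 1 := by
    rw [inner_self_eq_norm_sq_to_K, hu1]; norm_num
  have hCu : C u = (ε : ℂ) • u := by rw [hCapp, huu, mul_one]
  have hCrange : LinearMap.range (C : H →ₗ[ℂ] H) = Submodule.span ℂ {u} := by
    apply le_antisymm
    · rintro w ⟨x, rfl⟩
      rw [ContinuousLinearMap.coe_coe, hCapp]
      exact Submodule.smul_mem _ _ (Submodule.mem_span_singleton_self u)
    · rw [Submodule.span_le, Set.singleton_subset_iff]
      refine ⟨(ε⁻¹ : ℂ) • u, ?_⟩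
      rw [ContinuousLinearMap.coe_coe, map_smul, hCu, smul_smul]
      have : ((ε : ℝ) : ℂ) ≠ 0 := by
        simp [hε.ne']
      rw [inv_mul_cancel₀ this, one_smul]
  have hCrank : Module.finrank ℂ (LinearMap.range (C : H →ₗ[ℂ] H)) = 1 := by
    rw [hCrange]; exact finrank_span_singleton hune
  have hCnorm : ‖C‖ ≤ ε := by
    apply ContinuousLinearMap.opNorm_le_bound _ hε.le
    intro x
    rw [hCapp, norm_smul, hu1, mul_one, norm_mul, Complex.norm_real, Real.norm_eq_abs,
      abs_of_pos hε]
    have := norm_inner_le_norm (𝕜 := ℂ) u x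
    rw [hu1, one_mul] at this
    exact mul_le_mul_of_nonneg_left this hε.le
  refine ⟨C, hCsa, hCpos, hCrank, hCnorm, ?_⟩
  -- now the norm-attainment part
  set T : H →L[ℂ] H := B + C with hTdef
  have hTsym : ∀ x y : H, (inner ℂ (T x) y : ℂ) = inner ℂ x (T y) := by
    intro x y
    simp only [hTdef, ContinuousLinearMap.add_apply, inner_add_left, inner_add_right,
      hBsym, hCsym]
  have hTpos : ∀ x : H, 0 ≤ (inner ℂ x (T x) : ℂ).re := by
    intro x
    simp only [hTdef, ContinuousLinearMap.add_apply, inner_add_right, Complex.add_re]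
    exact add_nonneg (hBpos x) (hCpos x)
  set lam : ℝ := ‖T‖ with hlamdef
  have hTu : (inner ℂ u (T u) : ℂ).re = (inner ℂ u (B u) : ℂ).re + ε := by
    simp only [hTdef, ContinuousLinearMap.add_apply, inner_add_right, Complex.add_re]
    congr 1
    rw [hCu, inner_smul_right, huu, mul_one, Complex.ofReal_re]
  have hre_le : (inner ℂ u (T u) : ℂ).re ≤ lam := by
    calc (inner ℂ u (T u) : ℂ).re ≤ ‖(inner ℂ u (T u) : ℂ)‖ := Complex.re_le_norm _
      _ ≤ ‖u‖ * ‖T u‖ := norm_inner_le_norm u (T u)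
      _ ≤ ‖u‖ * (‖T‖ * ‖u‖) := by
          exact mul_le_mul_of_nonneg_left (T.le_opNorm u) (norm_nonneg u)
      _ = lam := by rw [hu1]; ring
  have hlam_lb : ‖B‖ + ε / 2 < lam := by
    have := hTu
    linarith [hre_le, hu2]
  have hlam_pos : 0 < lam := lt_of_le_of_lt (by positivity) hlam_lb
  -- invertibility of lam - B
  set D : H →L[ℂ] H := algebraMap ℂ (H →L[ℂ] H) (lam : ℂ) - B with hDdef
  have hD : IsUnit D := by
    rw [hDdef]
    rw [← spectrum.notMem_iff]
    intro hmem
    have h1 := spectrum.norm_le_norm_of_mem hmem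
    rw [Complex.norm_real, Real.norm_eq_abs, abs_of_pos hlam_pos] at h1
    linarith
  set R : H →L[ℂ] H := ↑hD.unit⁻¹ with hRdef
  have hRD : ∀ x : H, R (D x) = x := by
    intro x
    have h1 : R * D = 1 := by
      have h2 : (↑hD.unit⁻¹ : H →L[ℂ] H) * ↑hD.unit = 1 := hD.unit.inv_mul
      rwa [hD.unit_spec] at h2
    rw [← ContinuousLinearMap.mul_apply, h1, ContinuousLinearMap.one_apply]
  have hDR : ∀ x : H, D (R x) = x := by
    intro x
    have h1 : D * R = 1 := by
      have h2 : (↑hD.unit : H →L[ℂ] H) * ↑hD.unit⁻¹ = 1 := hD.unit.mul_inv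
      rwa [hD.unit_spec] at h2
    rw [← ContinuousLinearMap.mul_apply, h1, ContinuousLinearMap.one_apply]
  have hDapp : ∀ x : H, D x = (lam : ℂ) • x - B x := by
    intro x
    rw [hDdef, ContinuousLinearMap.sub_apply, Algebra.algebraMap_eq_smul_one,
      ContinuousLinearMap.smul_apply, ContinuousLinearMap.one_apply]
  set E : H →L[ℂ] H := algebraMap ℂ (H →L[ℂ] H) (lam : ℂ) - T with hEdef
  have hEapp : ∀ x : H, E x = (lam : ℂ) • x - T x := by
    intro x
    rw [hEdef, ContinuousLinearMap.sub_apply, Algebra.algebraMap_eq_smul_one,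
      ContinuousLinearMap.smul_apply, ContinuousLinearMap.one_apply]
  have hED : ∀ x : H, E x = D x - C x := by
    intro x
    rw [hEapp, hDapp, hTdef, ContinuousLinearMap.add_apply]
    abel
  -- approximate eigenvectors
  have happrox : ∀ η : ℝ, 0 < η → ∃ x : H, ‖x‖ = 1 ∧ ‖E x‖ < η := by
    intro η hη
    have hmu : lam - η ^ 2 / (2 * lam) < ‖T‖ := by
      have : 0 < η ^ 2 / (2 * lam) := by positivity
      rw [← hlamdef]; linarith
    obtain ⟨x, hx1, hx2⟩ := aux_sup T hTsym hTpos hmu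
    refine ⟨x, hx1, ?_⟩
    have hnorm_sq : ‖E x‖ ^ 2 = lam ^ 2 - 2 * (lam * (inner ℂ x (T x) : ℂ).re) + ‖T x‖ ^ 2 := by
      rw [hEapp, norm_sub_sq (𝕜 := ℂ)]
      congr 2
      · rw [norm_smul, hx1, mul_one, Complex.norm_real, Real.norm_eq_abs,
          abs_of_pos hlam_pos]
      · rw [inner_smul_left, Complex.conj_ofReal, RCLike.re_to_complex, Complex.re_ofReal_mul]
    have hTx_le : ‖T x‖ ≤ lam := by
      have := T.le_opNorm x
      rw [hx1, mul_one] at this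
      exact this
    have h2 : ‖E x‖ ^ 2 < η ^ 2 := by
      have hTx2 : ‖T x‖ ^ 2 ≤ lam ^ 2 := by nlinarith [norm_nonneg (T x)]
      have : lam * (lam - η ^ 2 / (2 * lam)) < lam * (inner ℂ x (T x) : ℂ).re :=
        mul_lt_mul_of_pos_left hx2 hlam_pos
      have hfield : lam * (lam - η ^ 2 / (2 * lam)) = lam ^ 2 - η ^ 2 / 2 := by
        field_simp
      rw [hfield] at this
      nlinarith [hnorm_sq]
    exact lt_of_pow_lt_pow_left₀ 2 hη.le h2
  set v : H := E (R u) with hvdef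
  rcases eq_or_ne v 0 with hv | hv
  · -- R u is an eigenvector
    have hRu0 : R u ≠ 0 := by
      intro h
      apply hune
      have := hDR u
      rw [h, map_zero] at this
      exact this.symm
    have hTRu : T (R u) = (lam : ℂ) • R u := by
      have h1 : (lam : ℂ) • R u - T (R u) = 0 := by rw [← hEapp, ← hvdef, hv]
      have := sub_eq_zero.mp h1
      exact this.symm
    refine ⟨(‖R u‖⁻¹ : ℂ) • R u, ?_, ?_⟩
    · rw [norm_smul]
      have : ‖R u‖ ≠ 0 := norm_ne_zero_iff.mpr hRu0
      simp [this]
    · rw [map_smul, hTRu, smul_comm, Complex.coe_smul]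
  · -- contradiction via approximate eigenvectors
    exfalso
    clear_value v E R D lam T C
    have hvpos : 0 < ‖v‖ := norm_pos_iff.mpr hv
    set K : ℝ := ‖E‖ * ‖R‖ with hKdef
    have hK0 : 0 ≤ K := by positivity
    set M : ℝ := ‖R‖ + (1 + K) * ‖R u‖ / ‖v‖ with hMdef
    have hM0 : 0 ≤ M := by positivity
    set η : ℝ := 1 / (2 * (M + 1)) with hηdef
    have hηpos : 0 < η := by positivity
    obtain ⟨x, hx1, hx2⟩ := happrox η hηpos
    -- identity: x = R (E x) + (ε * ⟪u,x⟫) • R u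
    have hxid : x = R (E x) + ((ε : ℂ) * (inner ℂ u x : ℂ)) • R u := by
      have h1 : D x = E x + C x := by rw [hED]; abel
      have h2 : x = R (E x + C x) := by rw [← h1, hRD]
      calc x = R (E x + C x) := h2
        _ = R (E x) + R (C x) := map_add R _ _
        _ = R (E x) + ((ε : ℂ) * (inner ℂ u x : ℂ)) • R u := by rw [hCapp, map_smul]
    have hid2 : E x = E (R (E x)) + ((ε : ℂ) * (inner ℂ u x : ℂ)) • v := by
      conv_lhs => rw [hxid]
      rw [map_add, map_smul, hvdef]
    set b : ℝ := ‖(inner ℂ u x : ℂ)‖ with hbdef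
    have hb0 : 0 ≤ b := norm_nonneg _
    have hscal : ‖((ε : ℂ) * (inner ℂ u x : ℂ)) • v‖ = ε * b * ‖v‖ := by
      rw [norm_smul, norm_mul, Complex.norm_real, Real.norm_eq_abs, abs_of_pos hε, hbdef]
    have step1 : ε * b * ‖v‖ ≤ η * (1 + K) := by
      have h4 : ‖((ε : ℂ) * (inner ℂ u x : ℂ)) • v‖ ≤ ‖E x‖ + ‖E (R (E x))‖ := by
        rw [← sub_eq_of_eq_add' hid2]
        exact norm_sub_le _ _
      have h5 : ‖E (R (E x))‖ ≤ K * ‖E x‖ := by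
        calc ‖E (R (E x))‖ ≤ ‖E‖ * ‖R (E x)‖ := E.le_opNorm _
          _ ≤ ‖E‖ * (‖R‖ * ‖E x‖) :=
              mul_le_mul_of_nonneg_left (R.le_opNorm _) (norm_nonneg E)
          _ = K * ‖E x‖ := by rw [hKdef]; ring
      rw [hscal] at h4
      nlinarith [hx2, norm_nonneg (E x), hK0]
    have step2 : 1 ≤ ‖R‖ * η + ε * b * ‖R u‖ := by
      have h6 : (1:ℝ) = ‖x‖ := hx1.symm
      have h7 : ‖x‖ ≤ ‖R (E x)‖ + ‖((ε : ℂ) * (inner ℂ u x : ℂ)) • R u‖ := by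
        conv_lhs => rw [hxid]
        exact norm_add_le _ _
      have h8 : ‖R (E x)‖ ≤ ‖R‖ * η := by
        calc ‖R (E x)‖ ≤ ‖R‖ * ‖E x‖ := R.le_opNorm _
          _ ≤ ‖R‖ * η := mul_le_mul_of_nonneg_left hx2.le (norm_nonneg R)
      have h9 : ‖((ε : ℂ) * (inner ℂ u x : ℂ)) • R u‖ = ε * b * ‖R u‖ := by
        rw [norm_smul, norm_mul, Complex.norm_real, Real.norm_eq_abs, abs_of_pos hε, hbdef]
      rw [h9] at h7
      linarith
    -- combine
    have step3 : ε * b * ‖R u‖ ≤ η * ((1 + K) * ‖R u‖ / ‖v‖) := by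
      have h10 : ε * b ≤ η * (1 + K) / ‖v‖ := by
        rw [le_div_iff₀ hvpos]
        linarith [step1]
      calc ε * b * ‖R u‖ ≤ (η * (1 + K) / ‖v‖) * ‖R u‖ :=
            mul_le_mul_of_nonneg_right h10 (norm_nonneg _)
        _ = η * ((1 + K) * ‖R u‖ / ‖v‖) := by ring
    have hfinal : 1 ≤ η * M := by
      rw [hMdef]
      calc (1:ℝ) ≤ ‖R‖ * η + ε * b * ‖R u‖ := step2
        _ ≤ ‖R‖ * η + η * ((1 + K) * ‖R u‖ / ‖v‖) := by linarith [step3]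
        _ = η * (‖R‖ + (1 + K) * ‖R u‖ / ‖v‖) := by ring
    have hlt : η * M < 1 := by
      rw [hηdef]
      rw [div_mul_eq_mul_div, one_mul, div_lt_one (by linarith)]
      linarith
    linarith
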